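/- arXiv:2410.12966 — 2 statements merged into one kernel-verified Lean document; each statement's English description precedes it below -/
import Mathlib

section
/- Let (A, p) be an integral market equilibrium for a fair division instance with additive valuations, let i be an agent whose bundle A_i contains only neutral items, and let j* ∉ A_i be an item that is a good or a chore. Then j* is transferable to agent i if and only if the ratio r := v_i(j*)/p_{j*} satisfies: r > 0, r ≥ v_i(j)/p_j for every item j with p_j > 0, and r ≤ v_i(j)/p_j for every item j with p_j < 0. -/
open Finset

/-- Item `j` is a good: some agent values it positively. -/
def IsGood {n : ℕ} {ι : Type*} (v : Fin n → ι → ℝ) (j : ι) : Prop := ∃ i, 0 < v i j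

/-- Item `j` is a chore: every agent values it negatively. -/
def IsChore {n : ℕ} {ι : Type*} (v : Fin n → ι → ℝ) (j : ι) : Prop := ∀ i, v i j < 0

/-- Item `j` is neutral: no agent values it positively and some agent values it zero. -/
def IsNeutral {n : ℕ} {ι : Type*} (v : Fin n → ι → ℝ) (j : ι) : Prop :=
  (∀ i, v i j ≤ 0) ∧ (∃ i, v i j = 0)

/-- `(A, p)` is an integral market equilibrium. -/
def IntMarketEq {n : ℕ} {ι : Type*}
    (v : Fin n → ι → ℝ) (A : Fin n → Finset ι) (p : ι → ℝ) : Prop :=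
  (∀ j : ι, IsGood v j → 0 < p j) ∧
  (∀ j : ι, IsChore v j → p j < 0) ∧
  (∀ j : ι, IsNeutral v j → p j = 0) ∧
  (∀ i, ∃ α : ℝ, 0 < α ∧ (∀ j : ι, v i j ≤ α * p j) ∧ (∀ j ∈ A i, v i j = α * p j))

/-- Item `j` is transferable to agent `i` in the integral market equilibrium
`(A, p)`: moving `j` into agent `i`'s bundle preserves market equilibrium. -/
def Transferable {n : ℕ} {ι : Type*} [DecidableEq ι]
    (v : Fin n → ι → ℝ) (A : Fin n → Finset ι) (p : ι → ℝ)
    (i : Fin n) (j : ι) : Prop :=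
  IntMarketEq v (fun k => if k = i then insert j (A k) else (A k).erase j) p

/-- If agent `i`'s bundle contains only neutral items, then a good or chore
`j* ∉ Aᵢ` is transferable to `i` iff the ratio `r = vᵢ(j*)/p(j*)` is positive,
at least `vᵢ(j)/p(j)` for every item `j` of positive price, and at most
`vᵢ(j)/p(j)` for every item `j` of negative price. -/
theorem transferable_iff_ratio_in_range
    {n : ℕ} {ι : Type*} [Fintype ι] [DecidableEq ι]
    (v : Fin n → ι → ℝ) (A : Fin n → Finset ι) (p : ι → ℝ)
    (hpart : ∀ j : ι, ∃! i, j ∈ A i)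
    (hme : IntMarketEq v A p)
    (i : Fin n) (hneutral : ∀ j ∈ A i, IsNeutral v j)
    (jstar : ι) (hjstar : jstar ∉ A i)
    (hjstargc : IsGood v jstar ∨ IsChore v jstar) :
    Transferable v A p i jstar ↔
      (0 < v i jstar / p jstar ∧
       (∀ j : ι, 0 < p j → v i j / p j ≤ v i jstar / p jstar) ∧
       (∀ j : ι, p j < 0 → v i jstar / p jstar ≤ v i j / p j)) := by
  
  obtain ⟨hg, hc, hn, heqA⟩ := hme
  have hpstar : p jstar ≠ 0 := by
    rcases hjstargc with h | h
    · exact (hg _ h).ne'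
    · exact (hc _ h).ne
  have hzero : ∀ j, p j = 0 → v i j ≤ 0 := by
    intro j hj
    by_contra hpos
    push_neg at hpos
    have := hg j ⟨i, hpos⟩
    linarith
  constructor
  · rintro ⟨-, -, -, heq'⟩
    obtain ⟨α, hα, h1, h2⟩ := heq' i
    have hαr : v i jstar = α * p jstar := by
      have := h2 jstar (by simp)
      simpa using this
    have hα_eq : v i jstar / p jstar = α := by
      field_simp [hαr]
      rw [hαr]; ring
    refine ⟨by rw [hα_eq]; exact hα, ?_, ?_⟩
    · intro j hpj
      rw [hα_eq, div_le_iff₀ hpj]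
      exact h1 j
    · intro j hpj
      rw [hα_eq, le_div_iff_of_neg hpj]
      exact h1 j
  · rintro ⟨hrpos, hge, hle⟩
    refine ⟨hg, hc, hn, ?_⟩
    intro k
    by_cases hk : k = i
    · subst hk
      refine ⟨v k jstar / p jstar, hrpos, ?_, ?_⟩
      · intro j
        rcases lt_trichotomy (p j) 0 with h | h | h
        · have := hle j h
          rw [le_div_iff_of_neg h] at this
          linarith
        · rw [h, mul_zero]; exact hzero j h
        · have := hge j h
          rw [div_le_iff₀ h] at this
          linarith
      · intro j hj
        simp only [if_pos, mem_insert] at hj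
        rcases hj with rfl | hj
        · rw [div_mul_cancel₀ _ hpstar]
        · obtain ⟨α, hα, h1, h2⟩ := heqA k
          have hpj : p j = 0 := hn j (hneutral j hj)
          rw [hpj, mul_zero]
          have := h2 j hj
          rw [hpj, mul_zero] at this
          exact this
    · obtain ⟨α, hα, h1, h2⟩ := heqA k
      refine ⟨α, hα, h1, ?_⟩
      intro j hj
      simp only [if_neg hk] at hj
      exact h2 j (mem_of_mem_erase hj)
end

section
/- Consider two agents with positive entitlements w_1, w_2, an allocation A = (A_1, A_2) of a finite item set M, and a price vector p : M → ℝ. Suppose agent 1 pWEF1-envies agent 2 in (A, p). Let B be obtained from A either (i) by moving a single item ĝ ∈ A_2 into agent 1's bundle (B_1 = A_1 ∪ {ĝ}, B_2 = A_2 ∖ {ĝ}), or (ii) by moving a single item ĉ ∈ A_1 into agent 2's bundle (B_1 = A_1 ∖ {ĉ}, B_2 = A_2 ∪ {ĉ}). Then agent 2 does not pWEF1-envy agent 1 in (B, p). -/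
open Finset

/-- Price of a bundle. -/
noncomputable def bundleVal {ι : Type*} (p : ι → ℝ) (S : Finset ι) : ℝ := ∑ t ∈ S, p t

/-- The agent with entitlement `wi` and bundle `Ai` pWEF1-envies the agent with
entitlement `wj` and bundle `Aj`, under prices `p`. -/
def PWEF1Envies {ι : Type*} [DecidableEq ι] (p : ι → ℝ) (wi wj : ℝ)
    (Ai Aj : Finset ι) : Prop :=
  bundleVal p Ai / wi < bundleVal p Aj / wj ∧
  (∀ g ∈ Aj, bundleVal p Ai / wi < bundleVal p (Aj.erase g) / wj) ∧
  (∀ c ∈ Ai, bundleVal p (Ai.erase c) / wi < bundleVal p Aj / wj)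

/-- If agent 1 pWEF1-envies agent 2, then after transferring a single item
(either an item `ĝ` from agent 2's bundle to agent 1, or an item `ĉ` from
agent 1's bundle to agent 2), agent 2 does not pWEF1-envy agent 1. -/
theorem no_reverse_pwef1_envy_after_transfer
    {ι : Type*} [DecidableEq ι]
    (p : ι → ℝ) (w₁ w₂ : ℝ) (hw₁ : 0 < w₁) (hw₂ : 0 < w₂)
    (A₁ A₂ : Finset ι) (hdisj : Disjoint A₁ A₂)
    (henvy : PWEF1Envies p w₁ w₂ A₁ A₂)
    (B₁ B₂ : Finset ι)
    (hB : (∃ g ∈ A₂, B₁ = insert g A₁ ∧ B₂ = A₂.erase g) ∨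
          (∃ c ∈ A₁, B₁ = A₁.erase c ∧ B₂ = insert c A₂)) :
    ¬ PWEF1Envies p w₂ w₁ B₂ B₁ := by
  rintro ⟨h1, h2, h3⟩
  rcases hB with ⟨g, hg, hB1, hB2⟩ | ⟨c, hc, hB1, hB2⟩
  · have hgA1 : g ∉ A₁ := fun h => (Finset.disjoint_left.mp hdisj h) hg
    have := h2 g (by rw [hB1]; exact Finset.mem_insert_self g A₁)
    rw [hB1, Finset.erase_insert hgA1, hB2] at this
    exact absurd (henvy.2.1 g hg) (not_lt.mpr this.le)
  · have hcA2 : c ∉ A₂ := Finset.disjoint_left.mp hdisj hc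
    have := h3 c (by rw [hB2]; exact Finset.mem_insert_self c A₂)
    rw [hB1, hB2, Finset.erase_insert hcA2] at this
    exact absurd (henvy.2.2 c hc) (not_lt.mpr this.le)
end
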